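/- arXiv:2105.03284 — 2 statements merged into one kernel-verified Lean document; each statement's English description precedes it below -/
import Mathlib

section
/- For every η > 0 there exist ε > 0 and a constant s_η > 0 with the following property. Let P, Q, P′, Q′ be points of the unit circle of the Euclidean plane with ‖P − Q‖ > η, and suppose that the Hausdorff distance d_H between the chords c = [P, Q] and c′ = [P′, Q′] satisfies d_H(c, c′) < ε. Then the endpoints of c′ can be labelled in a unique way as P′ and Q′ so that ‖P − P′‖ < ‖Q − P′‖ and ‖Q − Q′‖ < ‖Q − P′‖, and for this labelling one has d_H(c, c′) ≤ max(‖P − P′‖, ‖Q − Q′‖) ≤ s_η · d_H(c, c′). -/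
/-- The Euclidean plane. -/
abbrev Plane := EuclideanSpace ℝ (Fin 2)

open Metric RealInnerProductSpace

lemma seg_compact (P Q : Plane) : IsCompact (segment ℝ P Q) := by
  rw [segment_eq_image]
  exact isCompact_Icc.image (by fun_prop)

lemma near_aux (η h : ℝ) (hη : 0 < η) (hh : 0 ≤ h) (P Q X Z : Plane)
    (hP : ‖P‖ = 1) (hQ : ‖Q‖ = 1) (hX : ‖X‖ = 1) (hPQ : η < ‖P - Q‖)
    (hZ : Z ∈ segment ℝ P Q) (hd : dist X Z ≤ h) :
    ‖X - P‖ ≤ (1 + 8/η^2) * h ∨ ‖X - Q‖ ≤ (1 + 8/η^2) * h := by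
  obtain ⟨a, b, ha, hb, hab, hZ⟩ := hZ
  have e1 : ‖P - Q‖^2 = 2 - 2 * ⟪P, Q⟫ := by
    rw [norm_sub_sq_real, hP, hQ]; ring
  have e2 : ‖Z‖^2 = a^2 + 2*a*b*⟪P, Q⟫ + b^2 := by
    rw [← hZ, norm_add_sq_real, norm_smul, norm_smul, real_inner_smul_left,
      real_inner_smul_right, hP, hQ, Real.norm_eq_abs, Real.norm_eq_abs,
      abs_of_nonneg ha, abs_of_nonneg hb]
    ring
  have hZsq : ‖Z‖^2 = 1 - a*b*‖P - Q‖^2 := by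
    linear_combination e2 + a*b*e1 + (a+b+1)*hab
  have hZ1 : ‖Z‖ ≤ 1 := by
    calc ‖Z‖ = ‖a • P + b • Q‖ := by rw [hZ]
    _ ≤ ‖a • P‖ + ‖b • Q‖ := norm_add_le _ _
    _ = 1 := by
        rw [norm_smul, norm_smul, hP, hQ, Real.norm_eq_abs, Real.norm_eq_abs,
          abs_of_nonneg ha, abs_of_nonneg hb]; linarith
  have h1Z : 1 - ‖Z‖ ≤ h := by
    have := norm_sub_norm_le X Z
    rw [dist_eq_norm] at hd
    linarith [hX ▸ this]
  have key : a * b * η^2 ≤ 2 * h := by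
    have h2 : a * b * ‖P - Q‖^2 ≤ 2 * h := by nlinarith [norm_nonneg Z]
    have hsq : η^2 ≤ ‖P - Q‖^2 := by nlinarith
    have := mul_le_mul_of_nonneg_left hsq (mul_nonneg ha hb)
    nlinarith
  have hη2 : 0 < η^2 := by positivity
  rcases le_or_gt b (1/2) with hcase | hcase
  · left
    have hb4 : b * η^2 ≤ 4 * h := by nlinarith
    have hZP : ‖Z - P‖ ≤ 2 * b := by
      have he : Z - P = b • (Q - P) := by
        rw [← hZ, show a = 1 - b by linarith]; module
      have hn : ‖Q - P‖ ≤ 2 := by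
        calc ‖Q - P‖ ≤ ‖Q‖ + ‖P‖ := norm_sub_le _ _
        _ = 2 := by rw [hP, hQ]; norm_num
      rw [he, norm_smul, Real.norm_eq_abs, abs_of_nonneg hb]
      calc b * ‖Q - P‖ ≤ b * 2 := mul_le_mul_of_nonneg_left hn hb
        _ = 2 * b := by ring
    have hXP : ‖X - P‖ ≤ h + 2 * b := by
      calc ‖X - P‖ ≤ ‖X - Z‖ + ‖Z - P‖ := norm_sub_le_norm_sub_add_norm_sub _ _ _
      _ ≤ h + 2 * b := by rw [dist_eq_norm] at hd; linarith
    have h2b : 2 * b ≤ 8 / η^2 * h := by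
      rw [div_mul_eq_mul_div, le_div_iff₀ hη2]
      linarith
    linarith
  · right
    have ha' : a ≤ 1/2 := by linarith
    have hb' : b = 1 - a := by linarith
    have ha4 : a * η^2 ≤ 4 * h := by nlinarith
    have hZQ : ‖Z - Q‖ ≤ 2 * a := by
      have he : Z - Q = a • (P - Q) := by
        rw [← hZ, hb']; module
      have hn : ‖P - Q‖ ≤ 2 := by
        calc ‖P - Q‖ ≤ ‖P‖ + ‖Q‖ := norm_sub_le _ _
        _ = 2 := by rw [hP, hQ]; norm_num
      rw [he, norm_smul, Real.norm_eq_abs, abs_of_nonneg ha]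
      calc a * ‖P - Q‖ ≤ a * 2 := mul_le_mul_of_nonneg_left hn ha
        _ = 2 * a := by ring
    have hXQ : ‖X - Q‖ ≤ h + 2 * a := by
      calc ‖X - Q‖ ≤ ‖X - Z‖ + ‖Z - Q‖ := norm_sub_le_norm_sub_add_norm_sub _ _ _
      _ ≤ h + 2 * a := by rw [dist_eq_norm] at hd; linarith
    have h2a : 2 * a ≤ 8 / η^2 * h := by
      rw [div_mul_eq_mul_div, le_div_iff₀ hη2]
      linarith
    linarith

lemma hd_le (P Q X Y : Plane) :
    hausdorffDist (segment ℝ P Q) (segment ℝ X Y) ≤ max ‖P - X‖ ‖Q - Y‖ := by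
  have hr : (0:ℝ) ≤ max ‖P - X‖ ‖Q - Y‖ := le_max_of_le_left (norm_nonneg _)
  apply hausdorffDist_le_of_mem_dist hr
  · rintro z ⟨a, b, ha, hb, hab, rfl⟩
    refine ⟨a • X + b • Y, ⟨a, b, ha, hb, hab, rfl⟩, ?_⟩
    rw [dist_eq_norm]
    have e : a • P + b • Q - (a • X + b • Y) = a • (P - X) + b • (Q - Y) := by module
    calc ‖a • P + b • Q - (a • X + b • Y)‖ = ‖a • (P - X) + b • (Q - Y)‖ := by rw [e]
      _ ≤ ‖a • (P - X)‖ + ‖b • (Q - Y)‖ := norm_add_le _ _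
      _ = a * ‖P - X‖ + b * ‖Q - Y‖ := by
          rw [norm_smul, norm_smul, Real.norm_eq_abs, Real.norm_eq_abs,
            abs_of_nonneg ha, abs_of_nonneg hb]
      _ ≤ a * max ‖P - X‖ ‖Q - Y‖ + b * max ‖P - X‖ ‖Q - Y‖ := by
          gcongr
          exacts [le_max_left _ _, le_max_right _ _]
      _ = max ‖P - X‖ ‖Q - Y‖ := by rw [← add_mul, hab, one_mul]
  · rintro z ⟨a, b, ha, hb, hab, rfl⟩
    refine ⟨a • P + b • Q, ⟨a, b, ha, hb, hab, rfl⟩, ?_⟩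
    rw [dist_eq_norm, norm_sub_rev]
    have e : a • P + b • Q - (a • X + b • Y) = a • (P - X) + b • (Q - Y) := by module
    calc ‖a • P + b • Q - (a • X + b • Y)‖ = ‖a • (P - X) + b • (Q - Y)‖ := by rw [e]
      _ ≤ ‖a • (P - X)‖ + ‖b • (Q - Y)‖ := norm_add_le _ _
      _ = a * ‖P - X‖ + b * ‖Q - Y‖ := by
          rw [norm_smul, norm_smul, Real.norm_eq_abs, Real.norm_eq_abs,
            abs_of_nonneg ha, abs_of_nonneg hb]
      _ ≤ a * max ‖P - X‖ ‖Q - Y‖ + b * max ‖P - X‖ ‖Q - Y‖ := by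
          gcongr
          exacts [le_max_left _ _, le_max_right _ _]
      _ = max ‖P - X‖ ‖Q - Y‖ := by rw [← add_mul, hab, one_mul]

lemma final (η h s : ℝ) (hη : 0 < η) (hh : 0 ≤ h) (P Q X Y : Plane)
    (hPQ : η < ‖P - Q‖)
    (hXP : ‖X - P‖ ≤ s * h) (hYQ : ‖Y - Q‖ ≤ s * h)
    (hsep : 2 * (s * h) < η)
    (hhd : Metric.hausdorffDist (segment ℝ P Q) (segment ℝ X Y) = h) :
    (∃! pq : Plane × Plane, ({pq.1, pq.2} : Set Plane) = {X, Y} ∧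
        ‖P - pq.1‖ < ‖Q - pq.1‖ ∧ ‖Q - pq.2‖ < ‖Q - pq.1‖) ∧
    ∀ pq : Plane × Plane, ({pq.1, pq.2} : Set Plane) = {X, Y} →
      ‖P - pq.1‖ < ‖Q - pq.1‖ → ‖Q - pq.2‖ < ‖Q - pq.1‖ →
      Metric.hausdorffDist (segment ℝ P Q) (segment ℝ X Y) ≤
          max ‖P - pq.1‖ ‖Q - pq.2‖ ∧
        max ‖P - pq.1‖ ‖Q - pq.2‖ ≤
          s * Metric.hausdorffDist (segment ℝ P Q) (segment ℝ X Y) := by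
  have hPX : ‖P - X‖ ≤ s * h := by rw [norm_sub_rev]; exact hXP
  have hQY : ‖Q - Y‖ ≤ s * h := by rw [norm_sub_rev]; exact hYQ
  have hQX : η - s * h < ‖Q - X‖ := by
    have t1 : ‖P - Q‖ ≤ ‖P - X‖ + ‖X - Q‖ := norm_sub_le_norm_sub_add_norm_sub P X Q
    rw [norm_sub_rev Q X]
    linarith
  have hPY : η - s * h < ‖P - Y‖ := by
    have t1 : ‖P - Q‖ ≤ ‖P - Y‖ + ‖Y - Q‖ := norm_sub_le_norm_sub_add_norm_sub P Y Q
    linarith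
  have hXY : X ≠ Y := by
    intro hxy
    rw [hxy] at hPX
    linarith
  have key : ∀ pq : Plane × Plane, ({pq.1, pq.2} : Set Plane) = {X, Y} →
      ‖P - pq.1‖ < ‖Q - pq.1‖ → ‖Q - pq.2‖ < ‖Q - pq.1‖ → pq = (X, Y) := by
    rintro ⟨p1, p2⟩ hset h1 h2
    simp only at h1 h2 ⊢
    have hp1 : p1 = X := by
      have hp1m : p1 ∈ ({X, Y} : Set Plane) := by
        rw [← hset]; exact Set.mem_insert _ _
      simp only [Set.mem_insert_iff, Set.mem_singleton_iff] at hp1m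
      rcases hp1m with hp | hp
      · exact hp
      · exfalso
        rw [hp] at h1
        rw [norm_sub_rev Q Y] at h1
        linarith
    have hp2 : p2 = Y := by
      have hYm : Y ∈ ({p1, p2} : Set Plane) := by
        rw [hset]; exact Set.mem_insert_of_mem _ rfl
      simp only [Set.mem_insert_iff, Set.mem_singleton_iff] at hYm
      rcases hYm with hp | hp
      · exact absurd (hp1.symm ▸ hp.symm : X = Y) hXY
      · exact hp.symm
    rw [hp1, hp2]
  constructor
  · refine ⟨(X, Y), ⟨rfl, ?_, ?_⟩, ?_⟩
    · simp only
      rw [norm_sub_rev Q X]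
      calc ‖P - X‖ ≤ s * h := hPX
        _ < η - s * h := by linarith
        _ < ‖X - Q‖ := by rwa [norm_sub_rev X Q]
    · simp only
      calc ‖Q - Y‖ ≤ s * h := hQY
        _ < η - s * h := by linarith
        _ < ‖Q - X‖ := hQX
    · rintro pq ⟨hset, h1, h2⟩
      exact key pq hset h1 h2
  · intro pq hset h1 h2
    have := key pq hset h1 h2
    subst this
    simp only
    constructor
    · exact hhd ▸ hd_le P Q X Y
    · rw [hhd]
      exact max_le hPX hQY

theorem stmt7 :
    ∀ η > (0 : ℝ), ∃ ε > (0 : ℝ), ∃ s > (0 : ℝ),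
      ∀ P Q X Y : Plane, ‖P‖ = 1 → ‖Q‖ = 1 → ‖X‖ = 1 → ‖Y‖ = 1 →
        η < ‖P - Q‖ →
        Metric.hausdorffDist (segment ℝ P Q) (segment ℝ X Y) < ε →
        (∃! pq : Plane × Plane, ({pq.1, pq.2} : Set Plane) = {X, Y} ∧
            ‖P - pq.1‖ < ‖Q - pq.1‖ ∧ ‖Q - pq.2‖ < ‖Q - pq.1‖) ∧
        ∀ pq : Plane × Plane, ({pq.1, pq.2} : Set Plane) = {X, Y} →
          ‖P - pq.1‖ < ‖Q - pq.1‖ → ‖Q - pq.2‖ < ‖Q - pq.1‖ →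
          Metric.hausdorffDist (segment ℝ P Q) (segment ℝ X Y) ≤
              max ‖P - pq.1‖ ‖Q - pq.2‖ ∧
            max ‖P - pq.1‖ ‖Q - pq.2‖ ≤
              s * Metric.hausdorffDist (segment ℝ P Q) (segment ℝ X Y) := by
  intro η hη
  obtain ⟨K, hK_def⟩ : ∃ K : ℝ, K = 1 + 8 / η^2 := ⟨_, rfl⟩
  have hK : 0 < K := by rw [hK_def]; positivity
  refine ⟨η / (8 * K), div_pos hη (by linarith), K, hK, ?_⟩
  intro P Q X Y hP hQ hX hY hPQ hd
  obtain ⟨h, hh_def⟩ : ∃ h : ℝ, h = Metric.hausdorffDist (segment ℝ P Q) (segment ℝ X Y) :=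
    ⟨_, rfl⟩
  rw [← hh_def] at hd
  have hh0 : 0 ≤ h := hh_def ▸ Metric.hausdorffDist_nonneg
  have hK1 : 1 ≤ K := by
    rw [hK_def]
    have : 0 ≤ 8 / η^2 := by positivity
    linarith
  have hKh : 2 * (K * h) < η / 4 := by
    have h1 : K * h < K * (η / (8 * K)) := mul_lt_mul_of_pos_left hd hK
    have h2 : K * (η / (8 * K)) = η / 8 := by
      field_simp
    rw [h2] at h1
    linarith
  have hne : EMetric.hausdorffEdist (segment ℝ P Q) (segment ℝ X Y) ≠ ⊤ := by
    apply Metric.hausdorffEdist_ne_top_of_nonempty_of_bounded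
    · exact ⟨P, left_mem_segment ℝ P Q⟩
    · exact ⟨X, left_mem_segment ℝ X Y⟩
    · exact (seg_compact P Q).isBounded
    · exact (seg_compact X Y).isBounded
  -- X and Y near P or Q
  have hnear : ∀ W : Plane, ‖W‖ = 1 → W ∈ segment ℝ X Y →
      ‖W - P‖ ≤ K * h ∨ ‖W - Q‖ ≤ K * h := by
    intro W hW hWm
    have hi : Metric.infDist W (segment ℝ P Q) ≤ h := by
      rw [hh_def, Metric.hausdorffDist_comm]
      exact Metric.infDist_le_hausdorffDist_of_mem hWm (by rw [EMetric.hausdorffEdist_comm]; exact hne)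
    obtain ⟨Z, hZm, hZd⟩ := (seg_compact P Q).exists_infDist_eq_dist ⟨P, left_mem_segment ℝ P Q⟩ W
    have hdWZ : dist W Z ≤ h := hZd ▸ hi
    have := near_aux η h hη hh0 P Q W Z hP hQ hW hPQ hZm hdWZ
    rwa [← hK_def] at this
  have hXnear := hnear X hX (left_mem_segment ℝ X Y)
  have hYnear := hnear Y hY (right_mem_segment ℝ X Y)
  -- not both near P
  have hnotP : ¬ (‖X - P‖ ≤ K * h ∧ ‖Y - P‖ ≤ K * h) := by
    rintro ⟨hx, hy⟩
    have hiQ : Metric.infDist Q (segment ℝ X Y) ≤ h :=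
      hh_def ▸ Metric.infDist_le_hausdorffDist_of_mem (right_mem_segment ℝ P Q) hne
    obtain ⟨W, hWm, hWd⟩ := (seg_compact X Y).exists_infDist_eq_dist ⟨X, left_mem_segment ℝ X Y⟩ Q
    have hdQW : dist Q W ≤ h := hWd ▸ hiQ
    have hWP : W ∈ Metric.closedBall P (K * h) := by
      apply (convex_closedBall P (K * h)).segment_subset _ _ hWm
      · rw [Metric.mem_closedBall, dist_eq_norm]; exact hx
      · rw [Metric.mem_closedBall, dist_eq_norm]; exact hy
    rw [Metric.mem_closedBall, dist_eq_norm] at hWP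
    have : ‖P - Q‖ ≤ ‖P - W‖ + ‖W - Q‖ := norm_sub_le_norm_sub_add_norm_sub _ _ _
    rw [norm_sub_rev P W, ← dist_eq_norm W Q, dist_comm] at this
    have hle : ‖P - Q‖ ≤ K * h + h := by linarith
    have : h ≤ K * h := le_mul_of_one_le_left hh0 hK1
    linarith
  have hnotQ : ¬ (‖X - Q‖ ≤ K * h ∧ ‖Y - Q‖ ≤ K * h) := by
    rintro ⟨hx, hy⟩
    have hiP : Metric.infDist P (segment ℝ X Y) ≤ h :=
      hh_def ▸ Metric.infDist_le_hausdorffDist_of_mem (left_mem_segment ℝ P Q) hne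
    obtain ⟨W, hWm, hWd⟩ := (seg_compact X Y).exists_infDist_eq_dist ⟨X, left_mem_segment ℝ X Y⟩ P
    have hdPW : dist P W ≤ h := hWd ▸ hiP
    have hWQ : W ∈ Metric.closedBall Q (K * h) := by
      apply (convex_closedBall Q (K * h)).segment_subset _ _ hWm
      · rw [Metric.mem_closedBall, dist_eq_norm]; exact hx
      · rw [Metric.mem_closedBall, dist_eq_norm]; exact hy
    rw [Metric.mem_closedBall, dist_eq_norm] at hWQ
    have : ‖P - Q‖ ≤ ‖P - W‖ + ‖W - Q‖ := norm_sub_le_norm_sub_add_norm_sub _ _ _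
    rw [← dist_eq_norm P W] at this
    have hle : ‖P - Q‖ ≤ h + K * h := by linarith
    have : h ≤ K * h := le_mul_of_one_le_left hh0 hK1
    linarith
  have hsep : 2 * (K * h) < η := by linarith
  rcases hXnear with hXP | hXQ
  · -- X near P, so Y near Q
    have hYQ : ‖Y - Q‖ ≤ K * h := by
      rcases hYnear with hYP | hYQ
      · exact absurd ⟨hXP, hYP⟩ hnotP
      · exact hYQ
    exact final η h K hη hh0 P Q X Y hPQ hXP hYQ hsep hh_def.symm
  · -- X near Q, so Y near P
    have hYP : ‖Y - P‖ ≤ K * h := by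
      rcases hYnear with hYP | hYQ
      · exact hYP
      · exact absurd ⟨hXQ, hYQ⟩ hnotQ
    have hseg : segment ℝ X Y = segment ℝ Y X := segment_symm ℝ X Y
    have hpair : ({X, Y} : Set Plane) = {Y, X} := Set.pair_comm X Y
    rw [hseg, hpair]
    exact final η h K hη hh0 P Q Y X hPQ hYP hXQ hsep (by rw [← hseg, ← hh_def])
end

section
/- Let n ≥ 2 and let (t₁, …, t_{n−1}) ∈ 𝔽ₙ⁰ be a minimal factorization of the n-cycle. Write each transposition tᵢ = (aᵢ bᵢ) with aᵢ < bᵢ. Then no two of these transpositions cross: there exist no indices i ≠ j with aᵢ < a_j < bᵢ < b_j. Equivalently, the chords joining e^{−2πi aᵢ/n} to e^{−2πi bᵢ/n} in the unit disk are pairwise noncrossing (they may share endpoints). -/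
open Equiv Equiv.Perm

/-- Left-to-right product of a list of permutations: the leftmost entry is applied first. -/
def prodLR {n : ℕ} (l : List (Equiv.Perm (Fin n))) : Equiv.Perm (Fin n) :=
  l.reverse.prod

/-- The set `𝔽ₙᵍ` of genus-`g` factorizations of the `n`-cycle `(1 2 ⋯ n)`
into transpositions; `𝔽ₙ⁰` is the set of minimal factorizations. -/
def Fcal (n g : ℕ) : Set (List (Equiv.Perm (Fin n))) :=
  {l | l.length = n - 1 + 2 * g ∧ (∀ t ∈ l, t.IsSwap) ∧ prodLR l = finRotate n}

lemma prodLR_nil {n : ℕ} : prodLR ([] : List (Perm (Fin n))) = 1 := rfl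

lemma prodLR_cons {n : ℕ} (t : Perm (Fin n)) (L : List (Perm (Fin n))) :
    prodLR (t :: L) = prodLR L * t := by
  simp [prodLR]

lemma prodLR_concat {n : ℕ} (t : Perm (Fin n)) (L : List (Perm (Fin n))) :
    prodLR (L ++ [t]) = t * prodLR L := by
  simp [prodLR]

lemma prodLR_cons_apply {n : ℕ} (t : Perm (Fin n)) (L : List (Perm (Fin n))) (z : Fin n) :
    prodLR (t :: L) z = prodLR L (t z) := by
  rw [prodLR_cons]; rfl

lemma swap_eq_swap_iff {α : Type*} [DecidableEq α] {a b u v : α} (huv : u ≠ v) :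
    Equiv.swap a b = Equiv.swap u v ↔ (a = u ∧ b = v) ∨ (a = v ∧ b = u) := by
  constructor
  · intro h
    have hb : Equiv.swap u v a = b := by rw [← h, swap_apply_left]
    have ha : Equiv.swap u v b = a := by rw [← h, swap_apply_right]
    by_cases hau : a = u
    · subst hau
      rw [swap_apply_left] at hb
      exact Or.inl ⟨rfl, hb.symm⟩
    · by_cases hav : a = v
      · subst hav
        rw [swap_apply_right] at hb
        exact Or.inr ⟨rfl, hb.symm⟩
      · rw [swap_apply_of_ne_of_ne hau hav] at hb
        subst hb
        exfalso
        apply huv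
        have h2 : Equiv.swap a a u = Equiv.swap u v u := by rw [h]
        rw [Equiv.swap_self] at h2
        simpa using h2
  · rintro (⟨rfl, rfl⟩ | ⟨rfl, rfl⟩)
    · rfl
    · exact Equiv.swap_comm _ _

lemma rotval {N : ℕ} (hN : 1 ≤ N) (k : Fin N) :
    (finRotate N k).val = if k.val + 1 = N then 0 else k.val + 1 := by
  rcases N with _ | M
  · omega
  · rw [finRotate_succ_apply, Fin.val_add_one]
    have := k.is_lt
    by_cases hk : k = Fin.last M
    · subst hk; simp [Fin.last]
    · have h2 : k.val ≠ M := fun h => hk (Fin.ext h)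
      rw [if_neg hk, if_neg (by omega : ¬ (k.val + 1 = M + 1))]

open Relation


section EqvMachinery

variable {α : Type*}

lemma eqvGen_pair_iff (R R' : α → α → Prop) (u v : α)
    (h : ∀ a b, R' a b ↔ R a b ∨ (a = u ∧ b = v) ∨ (a = v ∧ b = u)) (x y : α) :
    EqvGen R' x y ↔ (EqvGen R x y ∨ (EqvGen R x u ∧ EqvGen R v y) ∨
      (EqvGen R x v ∧ EqvGen R u y)) := by
  constructor
  · intro hxy
    induction hxy with
    | rel a b hab =>
      rcases (h a b).mp hab with hr | ⟨rfl, rfl⟩ | ⟨rfl, rfl⟩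
      · exact Or.inl (EqvGen.rel _ _ hr)
      · exact Or.inr (Or.inl ⟨EqvGen.refl _, EqvGen.refl _⟩)
      · exact Or.inr (Or.inr ⟨EqvGen.refl _, EqvGen.refl _⟩)
    | refl a => exact Or.inl (EqvGen.refl _)
    | symm a b _ ih =>
      rcases ih with hr | ⟨h1, h2⟩ | ⟨h1, h2⟩
      · exact Or.inl hr.symm
      · exact Or.inr (Or.inr ⟨h2.symm, h1.symm⟩)
      · exact Or.inr (Or.inl ⟨h2.symm, h1.symm⟩)
    | trans a b c _ _ ih1 ih2 =>
      rcases ih1 with hr1 | ⟨h1, h2⟩ | ⟨h1, h2⟩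
      · rcases ih2 with hr2 | ⟨h3, h4⟩ | ⟨h3, h4⟩
        · exact Or.inl (hr1.trans _ _ _ hr2)
        · exact Or.inr (Or.inl ⟨hr1.trans _ _ _ h3, h4⟩)
        · exact Or.inr (Or.inr ⟨hr1.trans _ _ _ h3, h4⟩)
      · rcases ih2 with hr2 | ⟨h3, h4⟩ | ⟨h3, h4⟩
        · exact Or.inr (Or.inl ⟨h1, h2.trans _ _ _ hr2⟩)
        · exact Or.inr (Or.inl ⟨h1, h4⟩)
        · exact Or.inl (h1.trans _ _ _ h4)
      · rcases ih2 with hr2 | ⟨h3, h4⟩ | ⟨h3, h4⟩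
        · exact Or.inr (Or.inr ⟨h1, h2.trans _ _ _ hr2⟩)
        · exact Or.inl (h1.trans _ _ _ h4)
        · exact Or.inr (Or.inr ⟨h1, h4⟩)
  · rintro (hr | ⟨h1, h2⟩ | ⟨h1, h2⟩)
    · exact hr.mono (fun a b hab => (h a b).mpr (Or.inl hab))
    · have huv : EqvGen R' u v := EqvGen.rel _ _ ((h u v).mpr (Or.inr (Or.inl ⟨rfl, rfl⟩)))
      have e1 := h1.mono (fun a b hab => (h a b).mpr (Or.inl hab))
      have e2 := h2.mono (fun a b hab => (h a b).mpr (Or.inl hab))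
      exact (e1.trans _ _ _ huv).trans _ _ _ e2
    · have huv : EqvGen R' v u := EqvGen.rel _ _ ((h v u).mpr (Or.inr (Or.inr ⟨rfl, rfl⟩)))
      have e1 := h1.mono (fun a b hab => (h a b).mpr (Or.inl hab))
      have e2 := h2.mono (fun a b hab => (h a b).mpr (Or.inl hab))
      exact (e1.trans _ _ _ huv).trans _ _ _ e2

lemma card_quot_step [Finite α] (R R' : α → α → Prop) (u v : α)
    (h : ∀ a b, R' a b ↔ R a b ∨ (a = u ∧ b = v) ∨ (a = v ∧ b = u)) :
    Nat.card (Quotient (EqvGen.setoid R)) ≤ Nat.card (Quotient (EqvGen.setoid R')) + 1 := by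
  classical
  have mono' : ∀ a b : α, EqvGen R a b → EqvGen R' a b := fun a b hab =>
    hab.mono (fun a b hab => (h a b).mpr (Or.inl hab))
  set QR := Quotient (EqvGen.setoid R)
  set QR' := Quotient (EqvGen.setoid R')
  let F : QR → QR' := Quotient.map id (fun a b hab => mono' a b hab)
  let G : QR → QR' ⊕ Unit := fun q =>
    if q = Quotient.mk (EqvGen.setoid R) u then Sum.inr () else Sum.inl (F q)
  have hG : Function.Injective G := by
    intro q q' hqq'
    by_cases h1 : q = Quotient.mk (EqvGen.setoid R) u <;>
      by_cases h2 : q' = Quotient.mk (EqvGen.setoid R) u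
    · exact h1.trans h2.symm
    · simp only [G, if_pos h1, if_neg h2] at hqq'; exact absurd hqq' (by simp)
    · simp only [G, if_neg h1, if_pos h2] at hqq'; exact absurd hqq' (by simp)
    · simp only [G, if_neg h1, if_neg h2, Sum.inl.injEq] at hqq'
      induction q using Quotient.ind
      induction q' using Quotient.ind
      rename_i a b
      simp only [F, Quotient.map_mk, id] at hqq'
      have hex : EqvGen R' a b := Quotient.exact hqq'
      rcases (eqvGen_pair_iff R R' u v h a b).mp hex with hr | ⟨hh1, _⟩ | ⟨_, hh2⟩
      · exact Quotient.sound hr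
      · exact absurd (Quotient.sound hh1) h1
      · exact absurd (Quotient.sound hh2.symm) h2
  calc Nat.card QR ≤ Nat.card (QR' ⊕ Unit) := Nat.card_le_card_of_injective G hG
    _ = Nat.card QR' + 1 := by simp [Nat.card_sum]

lemma card_quot_le_of_anchor [Finite α] (R : α → α → Prop)
    (f : α → α) (hf : ∀ z, EqvGen R z (f z)) (N : ℕ) (e : ℕ → α)
    (he : ∀ z, ∃ b, b < N ∧ e b = f z) :
    Nat.card (Quotient (EqvGen.setoid R)) ≤ N := by
  have hsurj : Function.Surjective
      (fun (b : Fin N) => Quotient.mk (EqvGen.setoid R) (e b.val)) := by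
    intro q
    induction q using Quotient.ind
    rename_i z
    obtain ⟨b, hb, hbe⟩ := he z
    refine ⟨⟨b, hb⟩, ?_⟩
    show Quotient.mk (EqvGen.setoid R) (e b) = Quotient.mk (EqvGen.setoid R) z
    rw [hbe]
    exact Quotient.sound (Relation.EqvGen.symm _ _ (hf z))
  have := Nat.card_le_card_of_surjective _ hsurj
  simpa using this

end EqvMachinery



variable {n : ℕ}

def SwapRel (L : List (Perm (Fin n))) (a b : Fin n) : Prop := Equiv.swap a b ∈ L

lemma swapRel_mono {L : List (Perm (Fin n))} {t : Perm (Fin n)} :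
    ∀ a b, SwapRel L a b → SwapRel (t :: L) a b :=
  fun _ _ h => List.mem_cons_of_mem _ h


lemma reach (L : List (Perm (Fin n))) (hsw : ∀ t ∈ L, t.IsSwap) (z : Fin n) :
    EqvGen (SwapRel L) z (prodLR L z) := by
  induction L generalizing z with
  | nil => exact EqvGen.refl _
  | cons t L ih =>
    rw [prodLR_cons_apply]
    have step : EqvGen (SwapRel (t :: L)) z (t z) := by
      obtain ⟨u, v, huv, rfl⟩ := hsw t (List.mem_cons_self)
      by_cases hu : z = u
      · subst hu
        rw [swap_apply_left]
        exact EqvGen.rel _ _ (List.mem_cons_self)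
      · by_cases hv : z = v
        · subst hv
          rw [swap_apply_right]
          exact EqvGen.rel _ _ (by rw [Equiv.swap_comm]; exact List.mem_cons_self)
        · rw [swap_apply_of_ne_of_ne hu hv]
          exact EqvGen.refl _
    have tail : EqvGen (SwapRel (t :: L)) (t z) (prodLR L (t z)) :=
      (ih (fun s hs => hsw s (List.mem_cons_of_mem _ hs)) (t z)).mono swapRel_mono
    exact step.trans _ _ _ tail

lemma count_list (L : List (Perm (Fin n))) (hsw : ∀ t ∈ L, t.IsSwap) :
    n ≤ Nat.card (Quotient (EqvGen.setoid (SwapRel L))) + L.length := by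
  induction L with
  | nil =>
    have hemp : ∀ a b : Fin n, EqvGen (SwapRel ([] : List (Perm (Fin n)))) a b → a = b := by
      intro a b h
      induction h with
      | rel a b hab => exact absurd hab List.not_mem_nil
      | refl a => rfl
      | symm a b _ ih => exact ih.symm
      | trans a b c _ _ ih1 ih2 => exact ih1.trans ih2
    have hbij : Function.Bijective
        (Quotient.mk (EqvGen.setoid (SwapRel ([] : List (Perm (Fin n)))))) := by
      constructor
      · intro a b hab
        exact hemp _ _ (Quotient.exact hab)
      · intro q; induction q using Quotient.ind; exact ⟨_, rfl⟩
    have := Nat.card_eq_of_bijective _ hbij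
    simp only [Nat.card_eq_fintype_card, Fintype.card_fin] at this
    omega
  | cons t L ih =>
    obtain ⟨u, v, huv, rfl⟩ := hsw t (List.mem_cons_self)
    have hiff : ∀ a b : Fin n, SwapRel (Equiv.swap u v :: L) a b ↔
        SwapRel L a b ∨ (a = u ∧ b = v) ∨ (a = v ∧ b = u) := by
      intro a b
      constructor
      · intro h
        rcases List.mem_cons.mp h with h | h
        · exact Or.inr ((swap_eq_swap_iff huv).mp h)
      
        · exact Or.inl h
      · rintro (h | h)
        · exact List.mem_cons_of_mem _ h
        · exact List.mem_cons.mpr (Or.inl ((swap_eq_swap_iff huv).mpr h))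
    have hstep := card_quot_step (SwapRel L) (SwapRel (Equiv.swap u v :: L)) u v hiff
    have := ih (fun s hs => hsw s (List.mem_cons_of_mem _ hs))
    simp only [List.length_cons]
    omega

lemma prod_fix (L : List (Perm (Fin n))) (S : Fin n → Prop)
    (h : ∀ t ∈ L, ∀ z, t z ≠ z → S z) : ∀ z, ¬ S z → prodLR L z = z := by
  induction L with
  | nil => intro z _; rfl
  | cons t L ih =>
    intro z hz
    rw [prodLR_cons_apply]
    have htz : t z = z := by
      by_contra hne
      exact hz (h t (List.mem_cons_self) z hne)
    rw [htz]
    exact ih (fun s hs => h s (List.mem_cons_of_mem _ hs)) z hz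

lemma prod_maps (L : List (Perm (Fin n))) (S : Fin n → Prop)
    (h : ∀ t ∈ L, ∀ z, t z ≠ z → S z) : ∀ z, S z → S (prodLR L z) := by
  intro z hz
  by_contra hw
  have h1 := prod_fix L S h _ hw
  have h2 : (prodLR L) z = prodLR L (prodLR L z) := by rw [h1]
  exact hw ((Equiv.injective _ h2) ▸ hz)

lemma split_commuting {M : Type*} [Monoid M] (P Q : M → Prop)
    (hcomm : ∀ s t, P s → Q t → Commute s t) :
    ∀ L : List M, (∀ t ∈ L, P t ∨ Q t) →
    ∃ L₁ L₂ : List M, (∀ t ∈ L₁, P t ∧ t ∈ L) ∧ (∀ t ∈ L₂, Q t ∧ t ∈ L) ∧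
      (∀ t ∈ L, t ∈ L₁ ∨ t ∈ L₂) ∧ L.reverse.prod = L₁.reverse.prod * L₂.reverse.prod ∧
      L₁.length + L₂.length = L.length := by
  intro L
  induction L with
  | nil => exact fun _ => ⟨[], [], by simp, by simp, by simp, by simp, rfl⟩
  | cons t L ih =>
    intro hPQ
    obtain ⟨L₁, L₂, h₁, h₂, h₃, h₄, h₅⟩ := ih (fun s hs => hPQ s (List.mem_cons_of_mem _ hs))
    rcases hPQ t (List.mem_cons_self) with hP | hQ
    · refine ⟨t :: L₁, L₂, ?_, ?_, ?_, ?_, ?_⟩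
      · intro s hs
        rcases List.mem_cons.mp hs with rfl | hs
        · exact ⟨hP, List.mem_cons_self⟩
        · exact ⟨(h₁ s hs).1, List.mem_cons_of_mem _ (h₁ s hs).2⟩
      · exact fun s hs => ⟨(h₂ s hs).1, List.mem_cons_of_mem _ (h₂ s hs).2⟩
      · intro s hs
        rcases List.mem_cons.mp hs with rfl | hs
        · exact Or.inl (List.mem_cons_self)
        · rcases h₃ s hs with h | h
          · exact Or.inl (List.mem_cons_of_mem _ h)
          · exact Or.inr h
      · have hc : Commute t (L₂.reverse.prod) := by
          apply Commute.list_prod_right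
          intro s hs
          exact hcomm t s hP (h₂ s (List.mem_reverse.mp hs)).1
        simp only [List.reverse_cons, List.prod_append, List.prod_cons, List.prod_nil,
          mul_one, h₄]
        rw [mul_assoc, ← hc.eq, ← mul_assoc]
      · simp only [List.length_cons]; omega
    · refine ⟨L₁, t :: L₂, ?_, ?_, ?_, ?_, ?_⟩
      · exact fun s hs => ⟨(h₁ s hs).1, List.mem_cons_of_mem _ (h₁ s hs).2⟩
      · intro s hs
        rcases List.mem_cons.mp hs with rfl | hs
        · exact ⟨hQ, List.mem_cons_self⟩
        · exact ⟨(h₂ s hs).1, List.mem_cons_of_mem _ (h₂ s hs).2⟩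
      · intro s hs
        rcases List.mem_cons.mp hs with rfl | hs
        · exact Or.inr (List.mem_cons_self)
        · rcases h₃ s hs with h | h
          · exact Or.inl h
          · exact Or.inr (List.mem_cons_of_mem _ h)
      · simp only [List.reverse_cons, List.prod_append, List.prod_cons, List.prod_nil,
          mul_one, h₄, mul_assoc]
      · simp only [List.length_cons]; omega


open scoped Classical in
noncomputable def pullT {N M : ℕ} (g : Fin N → Fin M) (t : Equiv.Perm (Fin N)) :
    Equiv.Perm (Fin M) :=
  if h : t.IsSwap then Equiv.swap (g h.choose) (g h.choose_spec.choose) else 1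

lemma pullT_swap {N M : ℕ} (g : Fin N → Fin M) {u v : Fin N} (huv : u ≠ v) :
    pullT g (Equiv.swap u v) = Equiv.swap (g u) (g v) := by
  have h : (Equiv.swap u v).IsSwap := ⟨u, v, huv, rfl⟩
  rw [pullT]
  rw [dif_pos h]
  obtain ⟨hne, heq⟩ := h.choose_spec.choose_spec
  rcases (swap_eq_swap_iff hne).mp heq with ⟨h1, h2⟩ | ⟨h1, h2⟩
  · exact congrArg₂ (fun a b => Equiv.swap a b) (congrArg g h1.symm) (congrArg g h2.symm)
  · calc Equiv.swap (g h.choose) (g h.choose_spec.choose)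
        = Equiv.swap (g v) (g u) :=
          congrArg₂ (fun a b => Equiv.swap a b) (congrArg g h2.symm) (congrArg g h1.symm)
      _ = Equiv.swap (g u) (g v) := Equiv.swap_comm _ _

lemma prod_pull {N M : ℕ} (g : Fin N → Fin M) (Fm : Fin M → Fin N) (SS : Fin N → Prop)
    (hgF : ∀ k, g (Fm k) = k) (hFg : ∀ z, SS z → Fm (g z) = z) (hSF : ∀ k, SS (Fm k)) :
    ∀ L : List (Equiv.Perm (Fin N)),
      (∀ t ∈ L, ∃ u v, u ≠ v ∧ t = Equiv.swap u v ∧ SS u ∧ SS v) →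
    ∀ k, prodLR (L.map (pullT g)) k = g (prodLR L (Fm k)) := by
  intro L
  induction L with
  | nil => intro _ k; exact (hgF k).symm
  | cons t L ih =>
    intro hL k
    obtain ⟨u, v, huv, rfl, hSu, hSv⟩ := hL t (List.mem_cons_self)
    rw [List.map_cons, prodLR_cons_apply, prodLR_cons_apply]
    have hSt : SS ((Equiv.swap u v) (Fm k)) := by
      by_cases h1 : Fm k = u
      · rw [h1, Equiv.swap_apply_left]; exact hSv
      · by_cases h2 : Fm k = v
        · rw [h2, Equiv.swap_apply_right]; exact hSu
        · rw [Equiv.swap_apply_of_ne_of_ne h1 h2]; exact hSF k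
    have hk : (pullT g (Equiv.swap u v)) k = g ((Equiv.swap u v) (Fm k)) := by
      rw [pullT_swap g huv]
      by_cases h1 : Fm k = u
      · have hgu : k = g u := by rw [← hgF k, h1]
        rw [h1, Equiv.swap_apply_left, hgu, Equiv.swap_apply_left]
      · by_cases h2 : Fm k = v
        · have hgv : k = g v := by rw [← hgF k, h2]
          rw [h2, Equiv.swap_apply_right, hgv, Equiv.swap_apply_right]
        · have hku : k ≠ g u := fun hh => h1 (by rw [hh]; exact hFg u hSu)
          have hkv : k ≠ g v := fun hh => h2 (by rw [hh]; exact hFg v hSv)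
          rw [Equiv.swap_apply_of_ne_of_ne h1 h2, Equiv.swap_apply_of_ne_of_ne hku hkv]
          exact (hgF k).symm
    have hrec := ih (fun s hs => hL s (List.mem_cons_of_mem _ hs))
      (g ((Equiv.swap u v) (Fm k)))
    rw [hFg _ hSt] at hrec
    rw [hk, hrec]

lemma swap_val {N : ℕ} (x y w : Fin N) : ((Equiv.swap x y) w).val =
    if w.val = x.val then y.val else if w.val = y.val then x.val else w.val := by
  rw [Equiv.swap_apply_def]
  by_cases h1 : w = x
  · subst h1; simp
  · have h1' : w.val ≠ x.val := fun hh => h1 (Fin.ext hh)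
    by_cases h2 : w = y
    · subst h2; simp [h1', if_neg h1]
    · have h2' : w.val ≠ y.val := fun hh => h2 (Fin.ext hh)
      rw [if_neg h1, if_neg h2, if_neg h1', if_neg h2']

def sigp {m : ℕ} (x y : Fin (m + 2)) : Equiv.Perm (Fin (m + 2)) :=
  Equiv.swap x y * finRotate (m + 2)

lemma sig_val {m : ℕ} (x y z : Fin (m + 2)) :
    ((sigp x y) z).val =
      (if (if z.val + 1 = m + 2 then 0 else z.val + 1) = x.val then y.val
       else if (if z.val + 1 = m + 2 then 0 else z.val + 1) = y.val then x.val
       else (if z.val + 1 = m + 2 then 0 else z.val + 1)) := by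
  show ((Equiv.swap x y) (finRotate (m + 2) z)).val = _
  rw [swap_val, rotval (by omega)]

lemma conn_left {m : ℕ} (x y : Fin (m + 2)) (hxy : x < y) (L : List (Equiv.Perm (Fin (m + 2))))
    (hsw : ∀ t ∈ L, t.IsSwap)
    (hagree : ∀ z : Fin (m + 2), x.val ≤ z.val → z.val < y.val → prodLR L z = sigp x y z) :
    ∀ z : Fin (m + 2), x.val ≤ z.val → z.val < y.val →
      Relation.EqvGen (SwapRel L) x z := by
  have hxyv : x.val < y.val := hxy
  suffices H : ∀ k : ℕ, ∀ z : Fin (m + 2), z.val = x.val + k → z.val < y.val →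
      Relation.EqvGen (SwapRel L) x z by
    intro z h1 h2; exact H (z.val - x.val) z (by omega) h2
  intro k
  induction k with
  | zero =>
    intro z hz _
    have : z = x := Fin.ext (by omega)
    subst this; exact Relation.EqvGen.refl _
  | succ k ih =>
    intro z hz h2
    have hyl : y.val < m + 2 := y.is_lt
    set w : Fin (m + 2) := ⟨x.val + k, by omega⟩ with hw
    have hwv : w.val = x.val + k := rfl
    have hxw : Relation.EqvGen (SwapRel L) x w := ih w rfl (by omega)
    have hsig : sigp x y w = z := by
      apply Fin.ext
      rw [sig_val]
      have c1 : ¬ (w.val + 1 = m + 2) := by omega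
      rw [if_neg c1, if_neg (by omega), if_neg (by omega)]
      omega
    have hprod : prodLR L w = z := by
      rw [hagree w (by omega) (by omega), hsig]
    have hr := reach L hsw w
    rw [hprod] at hr
    exact hxw.trans _ _ _ hr

lemma conn_right {m : ℕ} (x y : Fin (m + 2)) (hxy : x < y)
    (L : List (Equiv.Perm (Fin (m + 2)))) (hsw : ∀ t ∈ L, t.IsSwap)
    (hagree : ∀ z : Fin (m + 2), (z.val < x.val ∨ y.val ≤ z.val) → prodLR L z = sigp x y z) :
    ∀ z : Fin (m + 2), (z.val < x.val ∨ y.val ≤ z.val) →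
      Relation.EqvGen (SwapRel L) y z := by
  have hxyv : x.val < y.val := hxy
  have hyl : y.val < m + 2 := y.is_lt
  set μ : Fin (m + 2) → ℕ :=
    fun z => if y.val ≤ z.val then z.val - y.val else z.val + (m + 2) - y.val with hμ
  suffices H : ∀ k : ℕ, ∀ z : Fin (m + 2), (z.val < x.val ∨ y.val ≤ z.val) → μ z = k →
      Relation.EqvGen (SwapRel L) y z by
    intro z hz; exact H (μ z) z hz rfl
  intro k
  induction k using Nat.strong_induction_on with
  | _ k ih =>
    intro z hz hk
    by_cases hzy : z = y
    · subst hzy; exact Relation.EqvGen.refl _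
    · have hzyv : z.val ≠ y.val := fun hh => hzy (Fin.ext hh)
      have hzl : z.val < m + 2 := z.is_lt
      -- predecessor
      by_cases hz0 : z.val = 0
      · -- z = 0, so z < x, predecessor is m+1
        have hx0 : 0 < x.val := by omega
        set w : Fin (m + 2) := ⟨m + 1, by omega⟩ with hw
        have hsig : sigp x y w = z := by
          apply Fin.ext
          rw [sig_val]
          have c1 : (m + 1) + 1 = m + 2 := by omega
          rw [if_pos c1]
          rw [if_neg (by omega), if_neg (by omega)]
          omega
        have hwv : w.val = m + 1 := rfl
        have hμw : μ w < k := by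
          have h1 : μ w = m + 1 - y.val := by
            simp only [hμ, hwv]
            rw [if_pos (by omega)]
          have h2 : k = m + 2 - y.val := by
            rw [← hk]
            simp only [hμ]
            rw [hz0, if_neg (by omega)]
            omega
          omega
        have hyw := ih (μ w) hμw w (Or.inr (by omega)) rfl
        have hr := reach L hsw w
        rw [hagree w (Or.inr (by omega)), hsig] at hr
        exact hyw.trans _ _ _ hr
      · set w : Fin (m + 2) := ⟨z.val - 1, by omega⟩ with hw
        have hwv : w.val = z.val - 1 := rfl
        have hwC : w.val < x.val ∨ y.val ≤ w.val := by
          rcases hz with h | h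
          · left; omega
          · right; omega
        have hsig : sigp x y w = z := by
          apply Fin.ext
          rw [sig_val]
          have c1 : ¬ (w.val + 1 = m + 2) := by omega
          rw [if_neg c1, if_neg (by omega), if_neg (by omega)]
          omega
        have hμw : μ w < k := by
          rw [← hk]
          simp only [hμ, hwv]
          rcases hz with h | h
          · rw [if_neg (by omega), if_neg (by omega)]; omega
          · rw [if_pos (by omega), if_pos (by omega)]; omega
        have hyw := ih (μ w) hμw w hwC rfl
        have hr := reach L hsw w
        rw [hagree w hwC, hsig] at hr
        exact hyw.trans _ _ _ hr

def FArc {m : ℕ} (x y : Fin (m + 2)) (k : Fin (y.val - x.val)) : Fin (m + 2) :=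
  ⟨x.val + k.val, by have := k.is_lt; have := y.is_lt; omega⟩

def gArc {m : ℕ} (x y : Fin (m + 2)) (h : x.val < y.val) (z : Fin (m + 2)) :
    Fin (y.val - x.val) :=
  ⟨min (z.val - x.val) (y.val - x.val - 1), by omega⟩

def FCo {m : ℕ} (x y : Fin (m + 2)) (k : Fin (m + 2 - (y.val - x.val))) : Fin (m + 2) :=
  ⟨min (if k.val < x.val then k.val else k.val + (y.val - x.val)) (m + 1),
    Nat.lt_succ_of_le (Nat.min_le_right _ _)⟩

def gCo {m : ℕ} (x y : Fin (m + 2)) (z : Fin (m + 2)) :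
    Fin (m + 2 - (y.val - x.val)) :=
  ⟨min (if z.val < x.val then z.val else z.val - (y.val - x.val))
      (m + 2 - (y.val - x.val) - 1),
    lt_of_le_of_lt (Nat.min_le_right _ _)
      (by have := y.is_lt; have := x.is_lt; omega)⟩

theorem mainNC : ∀ (n : ℕ) (l : List (Equiv.Perm (Fin n))),
    (∀ t ∈ l, t.IsSwap) → prodLR l = finRotate n → l.length = n - 1 →
    ∀ a b a' b' : Fin n, a < b → a' < b' →
      Equiv.swap a b ∈ l → Equiv.swap a' b' ∈ l →
      ¬(a < a' ∧ a' < b ∧ b < b') := by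
  intro n
  induction n using Nat.strong_induction_on with
  | _ n IH =>
  intro l hswl hprod hlen
  by_cases hn2 : n < 2
  · have hl0 : l = [] := List.length_eq_zero_iff.mp (by omega)
    subst hl0
    intro a b a' b' _ _ hmem _
    exact absurd hmem List.not_mem_nil
  push_neg at hn2
  obtain ⟨m, rfl⟩ : ∃ m, n = m + 2 := ⟨n - 2, by omega⟩
  rcases List.eq_nil_or_concat l with rfl | ⟨l', t, rfl⟩
  · simp at hlen
  simp only [List.concat_eq_append] at hswl hprod hlen ⊢
  have hlen' : l'.length = m := by
    rw [List.length_append] at hlen; simp at hlen; omega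
  obtain ⟨u, v, huv, htuv⟩ := hswl t (by simp)
  obtain ⟨x, y, hxy, htxy⟩ : ∃ x y : Fin (m + 2), x < y ∧ t = Equiv.swap x y := by
    rcases lt_or_gt_of_ne huv with h | h
    · exact ⟨u, v, h, htuv⟩
    · exact ⟨v, u, h, htuv.trans (Equiv.swap_comm u v)⟩
  have hxv : x.val < y.val := hxy
  have hyl : y.val < m + 2 := y.is_lt
  have hxl : x.val < m + 2 := x.is_lt
  have hsig : prodLR l' = sigp x y := by
    have h1 : prodLR (l' ++ [t]) = t * prodLR l' := prodLR_concat t l'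
    rw [hprod, htxy] at h1
    have h2 : (Equiv.swap x y)⁻¹ * finRotate (m + 2) = prodLR l' := by
      rw [h1, ← mul_assoc, inv_mul_cancel, one_mul]
    rw [← h2, Equiv.swap_inv, sigp]
  have hagree' : ∀ z, prodLR l' z = sigp x y z := fun z => by rw [hsig]
  have hswl' : ∀ s ∈ l', s.IsSwap := fun s hs => hswl s (by simp [hs])
  -- the interval predicate
  have hinSdec : ∀ z : Fin (m + 2), (x.val ≤ z.val ∧ z.val < y.val) ∨
      (z.val < x.val ∨ y.val ≤ z.val) := by intro z; omega
  -- Step A : no edge of l' joins the two arcs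
  have hncross : ∀ p q : Fin (m + 2), Equiv.swap p q ∈ l' →
      (x.val ≤ p.val ∧ p.val < y.val) → (q.val < x.val ∨ y.val ≤ q.val) → False := by
    intro p q hmem hp hq
    have hcount := count_list l' hswl'
    rw [hlen'] at hcount
    have hanchor : ∀ z : Fin (m + 2), Relation.EqvGen (SwapRel l') z x := by
      have hconL : ∀ z : Fin (m + 2), x.val ≤ z.val → z.val < y.val →
          Relation.EqvGen (SwapRel l') x z :=
        conn_left x y hxy l' hswl' (fun z _ _ => hagree' z)
      have hconR : ∀ z : Fin (m + 2), (z.val < x.val ∨ y.val ≤ z.val) →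
          Relation.EqvGen (SwapRel l') y z :=
        conn_right x y hxy l' hswl' (fun z _ => hagree' z)
      intro z
      rcases hinSdec z with hz | hz
      · exact (hconL z hz.1 hz.2).symm
      · have h1 : Relation.EqvGen (SwapRel l') z y := (hconR z hz).symm
        have h2 : Relation.EqvGen (SwapRel l') y q := hconR q hq
        have h3 : Relation.EqvGen (SwapRel l') q p :=
          (Relation.EqvGen.rel p q hmem).symm
        have h4 : Relation.EqvGen (SwapRel l') p x := (hconL p hp.1 hp.2).symm
        exact ((h1.trans _ _ _ h2).trans _ _ _ h3).trans _ _ _ h4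
    have hle := card_quot_le_of_anchor (SwapRel l') (fun _ => x) hanchor 1
      (fun _ => x) (fun z => ⟨0, by omega, rfl⟩)
    omega
  -- the side predicates
  set P : Equiv.Perm (Fin (m + 2)) → Prop :=
    fun s => ∀ z, s z ≠ z → (x.val ≤ z.val ∧ z.val < y.val) with hP
  set Q : Equiv.Perm (Fin (m + 2)) → Prop :=
    fun s => ∀ z, s z ≠ z → (z.val < x.val ∨ y.val ≤ z.val) with hQ
  have hPQ : ∀ s ∈ l', P s ∨ Q s := by
    intro s hs
    obtain ⟨p, q, hpq, rfl⟩ := hswl' s hs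
    have hsupp : ∀ z, (Equiv.swap p q) z ≠ z → z = p ∨ z = q := by
      intro z hz
      by_contra hcon
      push_neg at hcon
      exact hz (Equiv.swap_apply_of_ne_of_ne hcon.1 hcon.2)
    rcases hinSdec p with h1 | h1 <;> rcases hinSdec q with h2 | h2
    · left; intro z hz; rcases hsupp z hz with rfl | rfl
      · exact h1
      · exact h2
    · exact (hncross p q hs h1 h2).elim
    · exact (hncross q p (by rw [Equiv.swap_comm] at hs; exact hs) h2 h1).elim
    · right; intro z hz; rcases hsupp z hz with rfl | rfl
      · exact h1
      · exact h2
  have hcomm : ∀ s s', P s → Q s' → Commute s s' := by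
    intro s s' hPs hQs'
    refine Equiv.Perm.Disjoint.commute (fun z => ?_)
    by_cases hz : s z = z
    · exact Or.inl hz
    · refine Or.inr ?_
      by_contra hc
      have := hQs' z hc
      have := hPs z hz
      omega
  obtain ⟨l₁, l₂, h₁, h₂, h₃, h₄, h₅⟩ := split_commuting P Q hcomm l' hPQ
  have h₄' : prodLR l' = prodLR l₁ * prodLR l₂ := h₄
  have hsw₁ : ∀ s ∈ l₁, s.IsSwap := fun s hs => hswl' s (h₁ s hs).2
  have hsw₂ : ∀ s ∈ l₂, s.IsSwap := fun s hs => hswl' s (h₂ s hs).2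
  have hfix₂ : ∀ z, (x.val ≤ z.val ∧ z.val < y.val) → prodLR l₂ z = z := by
    intro z hz
    exact prod_fix l₂ (fun w => w.val < x.val ∨ y.val ≤ w.val)
      (fun s hs w hw => (h₂ s hs).1 w hw) z (by omega)
  have hfix₁ : ∀ z, (z.val < x.val ∨ y.val ≤ z.val) → prodLR l₁ z = z := by
    intro z hz
    exact prod_fix l₁ (fun w => x.val ≤ w.val ∧ w.val < y.val)
      (fun s hs w hw => (h₁ s hs).1 w hw) z (by omega)
  have hagree₁ : ∀ z, (x.val ≤ z.val ∧ z.val < y.val) → prodLR l₁ z = sigp x y z := by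
    intro z hz
    have h0 : prodLR l' z = prodLR l₁ (prodLR l₂ z) := by rw [h₄']; rfl
    rw [hfix₂ z hz] at h0
    rw [← h0, hagree']
  have hmaps₂ : ∀ z, (z.val < x.val ∨ y.val ≤ z.val) →
      ((prodLR l₂ z).val < x.val ∨ y.val ≤ (prodLR l₂ z).val) := by
    intro z hz
    have := prod_maps l₂ (fun w => w.val < x.val ∨ y.val ≤ w.val)
      (fun s hs w hw => (h₂ s hs).1 w hw) z hz
    exact this
  have hagree₂ : ∀ z, (z.val < x.val ∨ y.val ≤ z.val) → prodLR l₂ z = sigp x y z := by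
    intro z hz
    have h0 : prodLR l' z = prodLR l₁ (prodLR l₂ z) := by rw [h₄']; rfl
    rw [hfix₁ _ (hmaps₂ z hz)] at h0
    rw [← h0, hagree']
  -- Step C : lengths of the two sublists
  have hm₂x : x.val + 1 ≤ m + 2 - (y.val - x.val) := by omega
  have hlb₁ : m + 2 ≤ (m + 2 - (y.val - x.val) + 1) + l₁.length := by
    have hcount₁ := count_list l₁ hsw₁
    have hf₁ : ∀ z : Fin (m + 2), Relation.EqvGen (SwapRel l₁) z
        (if x.val ≤ z.val ∧ z.val < y.val then x else z) := by
      intro z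
      by_cases hz : x.val ≤ z.val ∧ z.val < y.val
      · rw [if_pos hz]
        exact (conn_left x y hxy l₁ hsw₁ (fun w h1 h2 => hagree₁ w ⟨h1, h2⟩) z hz.1 hz.2).symm
      · rw [if_neg hz]; exact Relation.EqvGen.refl _
    have hq₁ := card_quot_le_of_anchor (SwapRel l₁) _ hf₁ (m + 2 - (y.val - x.val) + 1)
      (fun v =>
        if v < x.val then (⟨min v (m + 1), by omega⟩ : Fin (m + 2))
        else if v = m + 2 - (y.val - x.val) then x
        else ⟨min (v + (y.val - x.val)) (m + 1), by omega⟩)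
      (by
        intro z
        have hzl := z.is_lt
        by_cases hz : x.val ≤ z.val ∧ z.val < y.val
        · refine ⟨m + 2 - (y.val - x.val), by omega, ?_⟩
          beta_reduce
          rw [if_neg (show ¬(m + 2 - (y.val - x.val) < x.val) by omega), if_pos rfl,
            if_pos hz]
        · rcases (by omega : z.val < x.val ∨ y.val ≤ z.val) with h | h
          · refine ⟨z.val, by omega, ?_⟩
            beta_reduce
            rw [if_pos h, if_neg hz]
            exact Fin.ext (show min z.val (m + 1) = z.val by omega)
          · refine ⟨z.val - (y.val - x.val), by omega, ?_⟩
            beta_reduce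
            rw [if_neg (show ¬(z.val - (y.val - x.val) < x.val) by omega),
              if_neg (show ¬(z.val - (y.val - x.val) = m + 2 - (y.val - x.val)) by omega),
              if_neg hz]
            exact Fin.ext
              (show min (z.val - (y.val - x.val) + (y.val - x.val)) (m + 1) = z.val by omega))
    omega
  have hlb₂ : m + 2 ≤ (y.val - x.val + 1) + l₂.length := by
    have hcount₂ := count_list l₂ hsw₂
    have hf₂ : ∀ z : Fin (m + 2), Relation.EqvGen (SwapRel l₂) z
        (if x.val ≤ z.val ∧ z.val < y.val then z else y) := by
      intro z
      by_cases hz : x.val ≤ z.val ∧ z.val < y.val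
      · rw [if_pos hz]; exact Relation.EqvGen.refl _
      · rw [if_neg hz]
        exact (conn_right x y hxy l₂ hsw₂ (fun w hw => hagree₂ w hw) z (by omega)).symm
    have hq₂ := card_quot_le_of_anchor (SwapRel l₂) _ hf₂ (y.val - x.val + 1)
      (fun v =>
        if v = y.val - x.val then y
        else (⟨min (x.val + v) (m + 1), by omega⟩ : Fin (m + 2)))
      (by
        intro z
        have hzl := z.is_lt
        by_cases hz : x.val ≤ z.val ∧ z.val < y.val
        · refine ⟨z.val - x.val, by omega, ?_⟩
          beta_reduce
          rw [if_neg (show ¬(z.val - x.val = y.val - x.val) by omega), if_pos hz]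
          exact Fin.ext (show min (x.val + (z.val - x.val)) (m + 1) = z.val by omega)
        · exact ⟨y.val - x.val, by omega, by beta_reduce; rw [if_pos rfl, if_neg hz]⟩)
    omega
  have hlen₁ : l₁.length = (y.val - x.val) - 1 := by
    rw [hlen'] at h₅; omega
  have hlen₂ : l₂.length = (m + 2 - (y.val - x.val)) - 1 := by
    rw [hlen'] at h₅; omega
  -- Step D : recurse on the two arcs
  have hl₁sw : ∀ s ∈ l₁, ∃ p q : Fin (m + 2), p ≠ q ∧ s = Equiv.swap p q ∧
      (x.val ≤ p.val ∧ p.val < y.val) ∧ (x.val ≤ q.val ∧ q.val < y.val) := by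
    intro s hs
    obtain ⟨p, q, hpq, rfl⟩ := hsw₁ s hs
    have hp := (h₁ _ hs).1 p (by rw [Equiv.swap_apply_left]; exact hpq.symm)
    have hq := (h₁ _ hs).1 q (by rw [Equiv.swap_apply_right]; exact hpq)
    exact ⟨p, q, hpq, rfl, hp, hq⟩
  have hl₂sw : ∀ s ∈ l₂, ∃ p q : Fin (m + 2), p ≠ q ∧ s = Equiv.swap p q ∧
      (p.val < x.val ∨ y.val ≤ p.val) ∧ (q.val < x.val ∨ y.val ≤ q.val) := by
    intro s hs
    obtain ⟨p, q, hpq, rfl⟩ := hsw₂ s hs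
    have hp := (h₂ _ hs).1 p (by rw [Equiv.swap_apply_left]; exact hpq.symm)
    have hq := (h₂ _ hs).1 q (by rw [Equiv.swap_apply_right]; exact hpq)
    exact ⟨p, q, hpq, rfl, hp, hq⟩
  -- arc 1
  have hgF₁ : ∀ k : Fin (y.val - x.val), gArc x y hxv (FArc x y k) = k := by
    intro k
    have := k.is_lt
    apply Fin.ext
    show min (x.val + k.val - x.val) (y.val - x.val - 1) = k.val
    omega
  have hFg₁ : ∀ z : Fin (m + 2), (x.val ≤ z.val ∧ z.val < y.val) →
      FArc x y (gArc x y hxv z) = z := by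
    intro z hz
    apply Fin.ext
    show x.val + min (z.val - x.val) (y.val - x.val - 1) = z.val
    omega
  have hSF₁ : ∀ k : Fin (y.val - x.val),
      x.val ≤ (FArc x y k).val ∧ (FArc x y k).val < y.val := by
    intro k
    have := k.is_lt
    constructor
    · show x.val ≤ x.val + k.val; omega
    · show x.val + k.val < y.val; omega
  have hg₁inj : ∀ p q : Fin (m + 2), (x.val ≤ p.val ∧ p.val < y.val) →
      (x.val ≤ q.val ∧ q.val < y.val) → gArc x y hxv p = gArc x y hxv q → p = q := by
    intro p q hp hq hpq
    have := congrArg (FArc x y) hpq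
    rwa [hFg₁ p hp, hFg₁ q hq] at this
  have hprodm₁ : prodLR (l₁.map (pullT (gArc x y hxv))) = finRotate (y.val - x.val) := by
    apply Equiv.ext
    intro k
    apply Fin.ext
    have hkl := k.is_lt
    rw [prod_pull (gArc x y hxv) (FArc x y) (fun z => x.val ≤ z.val ∧ z.val < y.val)
      hgF₁ hFg₁ hSF₁ l₁ (fun s hs => hl₁sw s hs) k]
    rw [hagree₁ (FArc x y k) (hSF₁ k)]
    have hsigv : ((sigp x y) (FArc x y k)).val =
        if x.val + k.val + 1 = y.val then x.val else x.val + k.val + 1 := by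
      rw [sig_val, show (FArc x y k).val = x.val + k.val from rfl,
        if_neg (show ¬(x.val + k.val + 1 = m + 2) by omega),
        if_neg (show ¬(x.val + k.val + 1 = x.val) by omega)]
    rw [show (gArc x y hxv ((sigp x y) (FArc x y k))).val =
        min (((sigp x y) (FArc x y k)).val - x.val) (y.val - x.val - 1) from rfl]
    rw [hsigv, rotval (by omega)]
    by_cases hky : x.val + k.val + 1 = y.val
    · rw [if_pos hky, if_pos (show k.val + 1 = y.val - x.val by omega)]
      omega
    · rw [if_neg hky, if_neg (show ¬(k.val + 1 = y.val - x.val) by omega)]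
      omega
  have hNC₁ := IH (y.val - x.val) (by omega) (l₁.map (pullT (gArc x y hxv)))
    (by
      intro s hs
      obtain ⟨s₀, hs₀, rfl⟩ := List.mem_map.mp hs
      obtain ⟨p, q, hpq, rfl, hp, hq⟩ := hl₁sw s₀ hs₀
      rw [pullT_swap _ hpq]
      exact ⟨_, _, fun hh => hpq (hg₁inj p q hp hq hh), rfl⟩)
    hprodm₁
    (by rw [List.length_map, hlen₁])
  -- arc 2
  have hgF₂ : ∀ k : Fin (m + 2 - (y.val - x.val)), gCo x y (FCo x y k) = k := by
    intro k
    have := k.is_lt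
    apply Fin.ext
    show min (if (FCo x y k).val < x.val then (FCo x y k).val
        else (FCo x y k).val - (y.val - x.val)) (m + 2 - (y.val - x.val) - 1) = k.val
    have hFv : (FCo x y k).val =
        if k.val < x.val then k.val else k.val + (y.val - x.val) := by
      show min (if k.val < x.val then k.val else k.val + (y.val - x.val)) (m + 1) = _
      by_cases h : k.val < x.val
      · rw [if_pos h]; omega
      · rw [if_neg h]; omega
    rw [hFv]
    by_cases h : k.val < x.val
    · rw [if_pos h, if_pos (by omega : k.val < x.val)]; omega
    · rw [if_neg h, if_neg (show ¬(k.val + (y.val - x.val) < x.val) by omega)]; omega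
  have hFCov : ∀ k : Fin (m + 2 - (y.val - x.val)), (FCo x y k).val =
      if k.val < x.val then k.val else k.val + (y.val - x.val) := by
    intro k
    have := k.is_lt
    show min (if k.val < x.val then k.val else k.val + (y.val - x.val)) (m + 1) = _
    by_cases h : k.val < x.val
    · rw [if_pos h]; omega
    · rw [if_neg h]; omega
  have hgCov : ∀ z : Fin (m + 2), (z.val < x.val ∨ y.val ≤ z.val) → (gCo x y z).val =
      if z.val < x.val then z.val else z.val - (y.val - x.val) := by
    intro z hz
    have := z.is_lt
    show min (if z.val < x.val then z.val else z.val - (y.val - x.val))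
      (m + 2 - (y.val - x.val) - 1) = _
    by_cases h : z.val < x.val
    · rw [if_pos h]; omega
    · rw [if_neg h]; omega
  have hFg₂ : ∀ z : Fin (m + 2), (z.val < x.val ∨ y.val ≤ z.val) →
      FCo x y (gCo x y z) = z := by
    intro z hz
    have := z.is_lt
    apply Fin.ext
    rw [hFCov, hgCov z hz]
    by_cases h : z.val < x.val
    · rw [if_pos h, if_pos h]
    · rw [if_neg h, if_neg (show ¬(z.val - (y.val - x.val) < x.val) by omega)]
      omega
  have hSF₂ : ∀ k : Fin (m + 2 - (y.val - x.val)),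
      ((FCo x y k).val < x.val ∨ y.val ≤ (FCo x y k).val) := by
    intro k
    have := k.is_lt
    rw [hFCov]
    by_cases h : k.val < x.val
    · rw [if_pos h]; omega
    · rw [if_neg h]; omega
  have hg₂inj : ∀ p q : Fin (m + 2), (p.val < x.val ∨ y.val ≤ p.val) →
      (q.val < x.val ∨ y.val ≤ q.val) → gCo x y p = gCo x y q → p = q := by
    intro p q hp hq hpq
    have := congrArg (FCo x y) hpq
    rwa [hFg₂ p hp, hFg₂ q hq] at this
  have hprodm₂ : prodLR (l₂.map (pullT (gCo x y))) = finRotate (m + 2 - (y.val - x.val)) := by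
    apply Equiv.ext
    intro k
    apply Fin.ext
    have hkl := k.is_lt
    rw [prod_pull (gCo x y) (FCo x y) (fun z => z.val < x.val ∨ y.val ≤ z.val)
      hgF₂ hFg₂ hSF₂ l₂ (fun s hs => hl₂sw s hs) k]
    rw [hagree₂ (FCo x y k) (hSF₂ k)]
    rw [rotval (by omega)]
    by_cases h1 : k.val < x.val
    · have hFk : (FCo x y k).val = k.val := by rw [hFCov, if_pos h1]
      by_cases h2 : k.val + 1 = x.val
      · -- lands on x, swapped to y
        have hB : ((sigp x y) (FCo x y k)).val = y.val := by
          rw [sig_val, hFk, if_neg (show ¬(k.val + 1 = m + 2) by omega),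
            if_pos h2]
        rw [hgCov _ (by rw [hB]; omega), hB]
        rw [if_neg (show ¬(y.val < x.val) by omega),
          if_neg (show ¬(k.val + 1 = m + 2 - (y.val - x.val)) by omega)]
        omega
      · have hB : ((sigp x y) (FCo x y k)).val = k.val + 1 := by
          rw [sig_val, hFk, if_neg (show ¬(k.val + 1 = m + 2) by omega),
            if_neg (show ¬(k.val + 1 = x.val) from h2),
            if_neg (show ¬(k.val + 1 = y.val) by omega)]
        rw [hgCov _ (by rw [hB]; omega), hB]
        rw [if_pos (show k.val + 1 < x.val by omega),
          if_neg (show ¬(k.val + 1 = m + 2 - (y.val - x.val)) by omega)]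
    · have hFk : (FCo x y k).val = k.val + (y.val - x.val) := by rw [hFCov, if_neg h1]
      by_cases h2 : k.val + 1 = m + 2 - (y.val - x.val)
      · -- wrap-around
        have hB : ((sigp x y) (FCo x y k)).val = if x.val = 0 then y.val else 0 := by
          rw [sig_val, hFk, if_pos (show k.val + (y.val - x.val) + 1 = m + 2 by omega)]
          by_cases h3 : x.val = 0
          · rw [if_pos (show (0 : ℕ) = x.val by omega), if_pos h3]
          · rw [if_neg (show ¬((0 : ℕ) = x.val) by omega),
              if_neg (show ¬((0 : ℕ) = y.val) by omega), if_neg h3]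
        by_cases h3 : x.val = 0
        · rw [if_pos h3] at hB
          rw [hgCov _ (by rw [hB]; omega), hB]
          rw [if_neg (show ¬(y.val < x.val) by omega), if_pos h2]
          omega
        · rw [if_neg h3] at hB
          rw [hgCov _ (by rw [hB]; omega), hB]
          rw [if_pos (show 0 < x.val by omega), if_pos h2]
      · have hB : ((sigp x y) (FCo x y k)).val = k.val + (y.val - x.val) + 1 := by
          rw [sig_val, hFk,
            if_neg (show ¬(k.val + (y.val - x.val) + 1 = m + 2) by omega),
            if_neg (show ¬(k.val + (y.val - x.val) + 1 = x.val) by omega),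
            if_neg (show ¬(k.val + (y.val - x.val) + 1 = y.val) by omega)]
        rw [hgCov _ (by rw [hB]; omega), hB]
        rw [if_neg (show ¬(k.val + (y.val - x.val) + 1 < x.val) by omega),
          if_neg (show ¬(k.val + 1 = m + 2 - (y.val - x.val)) from h2)]
        omega
  have hNC₂ := IH (m + 2 - (y.val - x.val)) (by omega) (l₂.map (pullT (gCo x y)))
    (by
      intro s hs
      obtain ⟨s₀, hs₀, rfl⟩ := List.mem_map.mp hs
      obtain ⟨p, q, hpq, rfl, hp, hq⟩ := hl₂sw s₀ hs₀
      rw [pullT_swap _ hpq]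
      exact ⟨_, _, fun hh => hpq (hg₂inj p q hp hq hh), rfl⟩)
    hprodm₂
    (by rw [List.length_map, hlen₂])
  -- Step E : conclude
  have hsideL : ∀ p q : Fin (m + 2), p.val < q.val → Equiv.swap p q ∈ l₁ →
      (x.val ≤ p.val ∧ p.val < y.val) ∧ (x.val ≤ q.val ∧ q.val < y.val) := by
    intro p q hpq hmem2
    have hP' := (h₁ _ hmem2).1
    have hne : p ≠ q := fun hh => by rw [hh] at hpq; omega
    have h1 := hP' p (by rw [Equiv.swap_apply_left]; exact hne.symm)
    have h2 := hP' q (by rw [Equiv.swap_apply_right]; exact hne)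
    exact ⟨h1, h2⟩
  have hsideR : ∀ p q : Fin (m + 2), p.val < q.val → Equiv.swap p q ∈ l₂ →
      (p.val < x.val ∨ y.val ≤ p.val) ∧ (q.val < x.val ∨ y.val ≤ q.val) := by
    intro p q hpq hmem2
    have hQ' := (h₂ _ hmem2).1
    have hne : p ≠ q := fun hh => by rw [hh] at hpq; omega
    have h1 := hQ' p (by rw [Equiv.swap_apply_left]; exact hne.symm)
    have h2 := hQ' q (by rw [Equiv.swap_apply_right]; exact hne)
    exact ⟨h1, h2⟩
  have hgArc_lt : ∀ p q : Fin (m + 2), (x.val ≤ p.val ∧ p.val < y.val) →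
      (x.val ≤ q.val ∧ q.val < y.val) → p.val < q.val →
      gArc x y hxv p < gArc x y hxv q := by
    intro p q hp hq hpq
    show min (p.val - x.val) (y.val - x.val - 1) < min (q.val - x.val) (y.val - x.val - 1)
    omega
  have hgCo_lt : ∀ p q : Fin (m + 2), (p.val < x.val ∨ y.val ≤ p.val) →
      (q.val < x.val ∨ y.val ≤ q.val) → p.val < q.val → gCo x y p < gCo x y q := by
    intro p q hp hq hpq
    show (gCo x y p).val < (gCo x y q).val
    rw [hgCov p hp, hgCov q hq]
    split_ifs <;> omega
  intro a b a' b' hab ha'b' hmem hmem' hcross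
  obtain ⟨hc1, hc2, hc3⟩ := hcross
  have habv : a.val < b.val := hab
  have ha'b'v : a'.val < b'.val := ha'b'
  have hc1v : a.val < a'.val := hc1
  have hc2v : a'.val < b.val := hc2
  have hc3v : b.val < b'.val := hc3
  rcases List.mem_append.mp hmem with hm | hm
  · rcases List.mem_append.mp hmem' with hm' | hm'
    · rcases h₃ _ hm with hA | hA <;> rcases h₃ _ hm' with hB | hB
      · -- both in the first arc : recurse
        obtain ⟨hpa, hpb⟩ := hsideL a b habv hA
        obtain ⟨hpa', hpb'⟩ := hsideL a' b' ha'b'v hB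
        refine hNC₁ (gArc x y hxv a) (gArc x y hxv b) (gArc x y hxv a') (gArc x y hxv b')
          (hgArc_lt a b hpa hpb habv) (hgArc_lt a' b' hpa' hpb' ha'b'v)
          (List.mem_map.mpr ⟨Equiv.swap a b, hA, pullT_swap _ (Fin.ne_of_lt hab)⟩)
          (List.mem_map.mpr ⟨Equiv.swap a' b', hB, pullT_swap _ (Fin.ne_of_lt ha'b')⟩)
          ⟨hgArc_lt a a' hpa hpa' hc1v, hgArc_lt a' b hpa' hpb hc2v,
            hgArc_lt b b' hpb hpb' hc3v⟩
      · obtain ⟨hpa, hpb⟩ := hsideL a b habv hA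
        obtain ⟨hpa', hpb'⟩ := hsideR a' b' ha'b'v hB
        omega
      · obtain ⟨hpa, hpb⟩ := hsideR a b habv hA
        obtain ⟨hpa', hpb'⟩ := hsideL a' b' ha'b'v hB
        omega
      · -- both in the complementary arc : recurse
        obtain ⟨hpa, hpb⟩ := hsideR a b habv hA
        obtain ⟨hpa', hpb'⟩ := hsideR a' b' ha'b'v hB
        refine hNC₂ (gCo x y a) (gCo x y b) (gCo x y a') (gCo x y b')
          (hgCo_lt a b hpa hpb habv) (hgCo_lt a' b' hpa' hpb' ha'b'v)
          (List.mem_map.mpr ⟨Equiv.swap a b, hA, pullT_swap _ (Fin.ne_of_lt hab)⟩)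
          (List.mem_map.mpr ⟨Equiv.swap a' b', hB, pullT_swap _ (Fin.ne_of_lt ha'b')⟩)
          ⟨hgCo_lt a a' hpa hpa' hc1v, hgCo_lt a' b hpa' hpb hc2v,
            hgCo_lt b b' hpb hpb' hc3v⟩
    · -- second chord is the last transposition (x, y)
      have ht' : Equiv.swap a' b' = Equiv.swap x y := by
        rw [← htxy]; exact List.mem_singleton.mp hm'
      rcases (swap_eq_swap_iff (Fin.ne_of_lt hxy)).mp ht' with ⟨he1, he2⟩ | ⟨he1, he2⟩
      · have he1v : a'.val = x.val := by rw [he1]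
        have he2v : b'.val = y.val := by rw [he2]
        rcases h₃ _ hm with hA | hA
        · obtain ⟨hpa, hpb⟩ := hsideL a b habv hA
          omega
        · obtain ⟨hpa, hpb⟩ := hsideR a b habv hA
          omega
      · have he1v : a'.val = y.val := by rw [he1]
        have he2v : b'.val = x.val := by rw [he2]
        omega
  · have ht0 : Equiv.swap a b = Equiv.swap x y := by
      rw [← htxy]; exact List.mem_singleton.mp hm
    rcases (swap_eq_swap_iff (Fin.ne_of_lt hxy)).mp ht0 with ⟨he1, he2⟩ | ⟨he1, he2⟩
    · have he1v : a.val = x.val := by rw [he1]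
      have he2v : b.val = y.val := by rw [he2]
      rcases List.mem_append.mp hmem' with hm' | hm'
      · rcases h₃ _ hm' with hB | hB
        · obtain ⟨hpa', hpb'⟩ := hsideL a' b' ha'b'v hB
          omega
        · obtain ⟨hpa', hpb'⟩ := hsideR a' b' ha'b'v hB
          omega
      · have ht1 : Equiv.swap a' b' = Equiv.swap x y := by
          rw [← htxy]; exact List.mem_singleton.mp hm'
        rcases (swap_eq_swap_iff (Fin.ne_of_lt hxy)).mp ht1 with ⟨hf1, hf2⟩ | ⟨hf1, hf2⟩
        · have hf1v : a'.val = x.val := by rw [hf1]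
          omega
        · have hf1v : a'.val = y.val := by rw [hf1]
          have hf2v : b'.val = x.val := by rw [hf2]
          omega
    · have he1v : a.val = y.val := by rw [he1]
      have he2v : b.val = x.val := by rw [he2]
      omega





theorem stmt10 (n : ℕ) (hn : 2 ≤ n) (l : List (Equiv.Perm (Fin n)))
    (hl : l ∈ Fcal n 0) :
    ∀ i j : Fin l.length, i ≠ j → ∀ a b a' b' : Fin n, a < b → a' < b' →
      l.get i = Equiv.swap a b → l.get j = Equiv.swap a' b' →
      ¬(a < a' ∧ a' < b ∧ b < b') := by
  obtain ⟨hlen, hsw, hprod⟩ := hl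
  intro i j _ a b a' b' hab ha'b' hgi hgj
  have hmi : Equiv.swap a b ∈ l := hgi ▸ List.get_mem l i
  have hmj : Equiv.swap a' b' ∈ l := hgj ▸ List.get_mem l j
  exact mainNC n l hsw hprod (by omega) a b a' b' hab ha'b' hmi hmj
end
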